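/- arXiv:1211.1660 — 5 statements merged into one kernel-verified Lean document; each statement's English description precedes it below -/
import Mathlib

section
/- For all real numbers a ≥ 0 and b ≥ 0, every natural number N ≥ 1, and nonnegative reals P₁,…,P_N, letting P̄ = (1/N)·∑_{i=1}^N P_i denote their average, one has (1/N)·∑_{i=1}^N log(1 + a·P_i/(1 + b·P_i)) ≤ log(1 + a·P̄/(1 + b·P̄)). -/
open Set

private lemma hasDerivAt_log_affine (c x : ℝ) (h : (0:ℝ) < 1 + c * x) :
    HasDerivAt (fun y => Real.log (1 + c * y)) (c / (1 + c * x)) x := by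
  have h1 : HasDerivAt (fun y : ℝ => 1 + c * y) c x := by
    simpa using ((hasDerivAt_id x).const_mul c).const_add 1
  simpa using h1.log h.ne'

private lemma hasDerivAt_frac (c x : ℝ) (h : (0:ℝ) < 1 + c * x) :
    HasDerivAt (fun y => c / (1 + c * y)) (-(c^2) / (1 + c * x)^2) x := by
  have h1 : HasDerivAt (fun y : ℝ => 1 + c * y) c x := by
    simpa using ((hasDerivAt_id x).const_mul c).const_add 1
  have : HasDerivAt (fun y => c / (1 + c * y)) ((0 * (1 + c * x) - c * c) / (1 + c * x) ^ 2) x :=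
    (hasDerivAt_const x c).div h1 h.ne'
  convert this using 1
  ring

private lemma concave_g (a b : ℝ) (ha : 0 ≤ a) (hb : 0 ≤ b) :
    ConcaveOn ℝ (Ici 0)
      (fun x => Real.log (1 + (a + b) * x) - Real.log (1 + b * x)) := by
  have hpos : ∀ (c : ℝ), 0 ≤ c → ∀ x : ℝ, 0 ≤ x → (0:ℝ) < 1 + c * x := by
    intro c hc x hx; positivity
  refine concaveOn_of_hasDerivWithinAt2_nonpos (f' := fun x =>
      (a + b) / (1 + (a + b) * x) - b / (1 + b * x))
    (f'' := fun x => -((a+b)^2) / (1 + (a+b)*x)^2 - (-(b^2) / (1 + b*x)^2))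
    (convex_Ici 0) ?_ ?_ ?_ ?_
  · apply ContinuousOn.sub
    · exact (Real.continuousOn_log.comp (by fun_prop)
        (fun x hx => (hpos _ (by linarith) _ hx).ne')).congr (fun x hx => rfl)
    · exact (Real.continuousOn_log.comp (by fun_prop)
        (fun x hx => (hpos _ hb _ hx).ne')).congr (fun x hx => rfl)
  · intro x hx
    rw [interior_Ici] at hx
    exact (((hasDerivAt_log_affine (a+b) x (hpos _ (by linarith) _ hx.le)).sub
      (hasDerivAt_log_affine b x (hpos _ hb _ hx.le))).hasDerivWithinAt)
  · intro x hx
    rw [interior_Ici] at hx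
    exact (((hasDerivAt_frac (a+b) x (hpos _ (by linarith) _ hx.le)).sub
      (hasDerivAt_frac b x (hpos _ hb _ hx.le))).hasDerivWithinAt)
  · intro x hx
    rw [interior_Ici] at hx
    have h1 : (0:ℝ) < 1 + (a+b) * x := hpos _ (by linarith) _ hx.le
    have h2 : (0:ℝ) < 1 + b * x := hpos _ hb _ hx.le
    have key : b / (1 + b * x) ≤ (a + b) / (1 + (a + b) * x) := by
      rw [div_le_div_iff₀ h2 h1]; nlinarith
    have hb' : 0 ≤ b / (1 + b * x) := by positivity
    have := mul_self_le_mul_self hb' key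
    rw [div_mul_div_comm, div_mul_div_comm, ← sq, ← sq, ← sq, ← sq] at this
    rw [neg_div, neg_div]
    linarith

open Finset in
/-- For `a, b ≥ 0`, `N ≥ 1` and nonnegative reals `P₁, …, P_N` with average `P̄`,
`(1/N)·∑ log (1 + a·Pᵢ/(1 + b·Pᵢ)) ≤ log (1 + a·P̄/(1 + b·P̄))`. -/
theorem avg_log_rate_le_log_rate_avg (a b : ℝ) (ha : 0 ≤ a) (hb : 0 ≤ b)
    (N : ℕ) (hN : 1 ≤ N) (P : Fin N → ℝ) (hP : ∀ i, 0 ≤ P i)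
    (Pbar : ℝ) (hPbar : Pbar = (1 / (N : ℝ)) * ∑ i, P i) :
    (1 / (N : ℝ)) * ∑ i, Real.log (1 + a * P i / (1 + b * P i)) ≤
      Real.log (1 + a * Pbar / (1 + b * Pbar)) := by
  have hNpos : (0:ℝ) < N := by exact_mod_cast hN
  -- rewrite log(1 + a x/(1+bx)) as log(1+(a+b)x) - log(1+bx) for x ≥ 0
  have hrw : ∀ x : ℝ, 0 ≤ x →
      Real.log (1 + a * x / (1 + b * x)) =
        Real.log (1 + (a + b) * x) - Real.log (1 + b * x) := by
    intro x hx
    have h2 : (0:ℝ) < 1 + b * x := by positivity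
    have : 1 + a * x / (1 + b * x) = (1 + (a + b) * x) / (1 + b * x) := by
      field_simp; ring
    rw [this, Real.log_div (by positivity) h2.ne']
  have hPbar0 : 0 ≤ Pbar := by
    rw [hPbar]
    exact mul_nonneg (by positivity) (Finset.sum_nonneg fun i _ => hP i)
  have hcc := concave_g a b ha hb
  have hJ := hcc.le_map_sum (t := Finset.univ) (w := fun _ : Fin N => 1 / (N:ℝ))
    (p := P) (fun i _ => by positivity)
    (by simp [Finset.sum_const, Finset.card_univ]; field_simp)
    (fun i _ => hP i)
  have hsum : ∑ i, (1 / (N:ℝ)) • P i = Pbar := by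
    rw [hPbar, Finset.mul_sum]; simp [smul_eq_mul]
  rw [hsum] at hJ
  calc (1 / (N : ℝ)) * ∑ i, Real.log (1 + a * P i / (1 + b * P i))
      = ∑ i, (1 / (N:ℝ)) • (Real.log (1 + (a+b) * P i) - Real.log (1 + b * P i)) := by
        rw [Finset.mul_sum]
        exact Finset.sum_congr rfl fun i _ => by rw [hrw _ (hP i)]; rfl
    _ ≤ Real.log (1 + (a+b) * Pbar) - Real.log (1 + b * Pbar) := hJ
    _ = Real.log (1 + a * Pbar / (1 + b * Pbar)) := (hrw _ hPbar0).symm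
end

section
/- Let (Ω, μ) be a probability space and let H, G : Ω → ℝ be nonnegative measurable functions with G > 0 almost everywhere, such that ω ↦ log(1 + H(ω)/G(ω)) is integrable and H is integrable. For P > 0 define S(P) as the supremum, over all measurable functions f : ℝ → ℝ with f ≥ 0 and ∫ f(H(ω)) dμ(ω) ≤ P, of ∫ log(1 + f(H(ω))·H(ω)/(1 + f(H(ω))·G(ω))) dμ(ω). Then S(P) tends to ∫ log(1 + H(ω)/G(ω)) dμ(ω) as P tends to infinity. -/
open Filter MeasureTheory in
/-- The optimized one-way secure rate `S(P)` — the supremum over all measurable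
nonnegative power allocations `f` with `∫ f(H) dμ ≤ P` of
`∫ log (1 + f(H)·H/(1 + f(H)·G)) dμ` — tends to `∫ log (1 + H/G) dμ` as `P → ∞`. -/
theorem tendsto_sSup_power_constrained_rate_atTop
    {Ω : Type*} [MeasurableSpace Ω] (μ : Measure Ω) [IsProbabilityMeasure μ]
    (H G : Ω → ℝ) (hHm : Measurable H) (hGm : Measurable G)
    (hH : ∀ ω, 0 ≤ H ω) (hG : ∀ᵐ ω ∂μ, 0 < G ω)
    (hint : Integrable (fun ω => Real.log (1 + H ω / G ω)) μ)
    (hHint : Integrable H μ) :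
    Tendsto (fun P : ℝ =>
        sSup {r : ℝ | ∃ f : ℝ → ℝ, Measurable f ∧ (∀ x, 0 ≤ f x) ∧
          (∫ ω, f (H ω) ∂μ) ≤ P ∧
          r = ∫ ω, Real.log (1 + f (H ω) * H ω / (1 + f (H ω) * G ω)) ∂μ})
      atTop (nhds (∫ ω, Real.log (1 + H ω / G ω) ∂μ)) := by
  set L := ∫ ω, Real.log (1 + H ω / G ω) ∂μ with hLdef
  -- pointwise key bounds
  have key : ∀ ω, 0 < G ω → ∀ x : ℝ, 0 ≤ x →
      0 ≤ Real.log (1 + x * H ω / (1 + x * G ω)) ∧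
      Real.log (1 + x * H ω / (1 + x * G ω)) ≤ Real.log (1 + H ω / G ω) := by
    intro ω hg x hx
    have hden : (0:ℝ) < 1 + x * G ω := by positivity
    have hratio0 : 0 ≤ x * H ω / (1 + x * G ω) := div_nonneg (mul_nonneg hx (hH ω)) hden.le
    constructor
    · exact Real.log_nonneg (by linarith)
    · apply Real.log_le_log (by linarith)
      have : x * H ω / (1 + x * G ω) ≤ H ω / G ω := by
        rw [div_le_div_iff₀ hden hg]
        have := mul_nonneg hx (mul_nonneg (hH ω) hg.le)
        nlinarith [hH ω]
      linarith
  have hL0 : 0 ≤ L := by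
    apply integral_nonneg_of_ae
    filter_upwards [hG] with ω hg
    exact Real.log_nonneg (by
      have : 0 ≤ H ω / G ω := div_nonneg (hH ω) hg.le
      linarith)
  -- every element of the set is ≤ L
  have elem_le : ∀ P : ℝ, ∀ r ∈ {r : ℝ | ∃ f : ℝ → ℝ, Measurable f ∧ (∀ x, 0 ≤ f x) ∧
      (∫ ω, f (H ω) ∂μ) ≤ P ∧
      r = ∫ ω, Real.log (1 + f (H ω) * H ω / (1 + f (H ω) * G ω)) ∂μ}, r ≤ L := by
    rintro P r ⟨f, hfm, hf0, _, rfl⟩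
    by_cases hi : Integrable (fun ω => Real.log (1 + f (H ω) * H ω / (1 + f (H ω) * G ω))) μ
    · apply integral_mono_ae hi hint
      filter_upwards [hG] with ω hg
      exact (key ω hg (f (H ω)) (hf0 _)).2
    · rw [integral_undef hi]; exact hL0
  have nonempty : ∀ P : ℝ, 0 ≤ P → ∀ c : ℝ, 0 ≤ c → c ≤ P →
      (∫ ω, Real.log (1 + c * H ω / (1 + c * G ω)) ∂μ) ∈
      {r : ℝ | ∃ f : ℝ → ℝ, Measurable f ∧ (∀ x, 0 ≤ f x) ∧
        (∫ ω, f (H ω) ∂μ) ≤ P ∧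
        r = ∫ ω, Real.log (1 + f (H ω) * H ω / (1 + f (H ω) * G ω)) ∂μ} := by
    intro P hP c hc hcP
    refine ⟨fun _ => c, measurable_const, fun _ => hc, ?_, rfl⟩
    simp [hcP]
  -- lower bound function
  set g : ℝ → ℝ := fun c => ∫ ω, Real.log (1 + c * H ω / (1 + c * G ω)) ∂μ with hgdef
  have hg_tendsto : Tendsto g atTop (nhds L) := by
    apply tendsto_integral_filter_of_dominated_convergence
      (fun ω => Real.log (1 + H ω / G ω))
    · filter_upwards with c
      exact ((measurable_const.add (((hHm.const_mul c)).div
        (measurable_const.add (hGm.const_mul c)))).log).aestronglyMeasurable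
    · filter_upwards [eventually_ge_atTop (0:ℝ)] with c hc
      filter_upwards [hG] with ω hg
      rw [Real.norm_eq_abs, abs_of_nonneg (key ω hg c hc).1]
      exact (key ω hg c hc).2
    · exact hint
    · filter_upwards [hG] with ω hg
      have h1 : Tendsto (fun c : ℝ => H ω / (c⁻¹ + G ω)) atTop (nhds (H ω / G ω)) := by
        have hd : Tendsto (fun c : ℝ => c⁻¹ + G ω) atTop (nhds (0 + G ω)) :=
          tendsto_inv_atTop_zero.add tendsto_const_nhds
        have := (tendsto_const_nhds (x := H ω) (f := atTop)).div hd
          (by rw [zero_add]; exact hg.ne')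
        rw [zero_add] at this
        exact this
      have h2 : Tendsto (fun c : ℝ => c * H ω / (1 + c * G ω)) atTop (nhds (H ω / G ω)) := by
        apply h1.congr'
        filter_upwards [eventually_gt_atTop (0:ℝ)] with c hc
        have hden : (0:ℝ) < 1 + c * G ω := by positivity
        have hden2 : (0:ℝ) < c⁻¹ + G ω := by positivity
        rw [div_eq_div_iff hden2.ne' hden.ne']
        field_simp
      have hcont : ContinuousAt Real.log (1 + H ω / G ω) := by
        apply Real.continuousAt_log
        have : 0 ≤ H ω / G ω := div_nonneg (hH ω) hg.le
        linarith
      exact hcont.tendsto.comp (tendsto_const_nhds.add h2)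
  -- squeeze
  apply tendsto_of_tendsto_of_tendsto_of_le_of_le' hg_tendsto tendsto_const_nhds
  · filter_upwards [eventually_ge_atTop (0:ℝ)] with P hP
    exact le_csSup ⟨L, elem_le P⟩ (nonempty P hP P hP le_rfl)
  · filter_upwards with P
    exact Real.sSup_le (elem_le P) hL0
end

section
/- Let (Ω, μ) be a probability space and let H₁, G₁, H₂, G₂ : Ω → ℝ be nonnegative measurable functions with G₁ > 0 and G₂ > 0 almost everywhere, such that ω ↦ log(1 + H₁(ω)/G₁(ω)) and ω ↦ log(1 + H₂(ω)/G₂(ω)) are integrable. Let T ≥ 2 be a natural number and ρ a real number with ρ² < 1. For P > 1 set P₁ = P − √P, P₂ = √P/(T − 1), α = P₁/(P₁ + 1), and define R_PD(P) = (1/T)·(−log(1 − α²ρ²)) + ((T−1)/T)·( ∫ log(1 + P₂·H₁/(1 + P₂·G₁)) dμ − log(1 + P₂/(1 + P₁)) + ∫ log(1 + P₂·H₂/(1 + P₂·G₂)) dμ − log(1 + P₂/(1 + P₁)) ). Then R_PD(P) tends to −(1/T)·log(1 − ρ²) + ((T−1)/T)·( ∫ log(1 + H₁/G₁) dμ + ∫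 log(1 + H₂/G₂) dμ ) as P tends to infinity. -/
open Filter MeasureTheory

private lemma sqrt_tendsto_atTop : Tendsto Real.sqrt atTop atTop := by
  rw [tendsto_atTop_atTop]
  intro b
  refine ⟨b ^ 2, fun a ha => ?_⟩
  calc b ≤ |b| := le_abs_self b
    _ = Real.sqrt (b ^ 2) := (Real.sqrt_sq_eq_abs b).symm
    _ ≤ Real.sqrt a := Real.sqrt_le_sqrt ha

private lemma sub_sqrt_tendsto_atTop : Tendsto (fun P : ℝ => P - Real.sqrt P) atTop atTop := by
  apply tendsto_atTop_mono' _ (_ : ∀ᶠ P in atTop, P / 2 ≤ P - Real.sqrt P)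
  · exact Tendsto.atTop_div_const (by norm_num) tendsto_id
  · filter_upwards [eventually_ge_atTop (4 : ℝ)] with P hP
    have h4 : (0:ℝ) ≤ P := by linarith
    have h2 : Real.sqrt P ≤ P / 2 := by
      have : Real.sqrt P ≤ Real.sqrt P * Real.sqrt P / 2 := by
        have h := (Real.le_sqrt (by norm_num) h4).mpr (by linarith : (2:ℝ)^2 ≤ P)
        nlinarith [Real.sqrt_nonneg P]
      rwa [Real.mul_self_sqrt h4] at this
    linarith

private lemma frac_tendsto_one : Tendsto (fun x : ℝ => x / (x + 1)) atTop (nhds 1) := by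
  have h : Tendsto (fun x : ℝ => 1 - 1 / (x + 1)) atTop (nhds 1) := by
    have h0 : Tendsto (fun x : ℝ => 1 / (x + 1)) atTop (nhds 0) :=
      tendsto_const_nhds.div_atTop (tendsto_atTop_add_const_right _ 1 tendsto_id)
    simpa using tendsto_const_nhds.sub h0
  refine h.congr' ?_
  filter_upwards [eventually_gt_atTop (0 : ℝ)] with x hx
  have : x + 1 ≠ 0 := by linarith
  field_simp
  ring

private lemma log_frac_tendsto (h g : ℝ) (hh : 0 ≤ h) (hg : 0 < g) :
    Tendsto (fun c : ℝ => Real.log (1 + c * h / (1 + c * g))) atTop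
      (nhds (Real.log (1 + h / g))) := by
  have key : Tendsto (fun c : ℝ => 1 + h / (c⁻¹ + g)) atTop (nhds (1 + h / g)) := by
    have h1 : Tendsto (fun c : ℝ => c⁻¹ + g) atTop (nhds (0 + g)) :=
      tendsto_inv_atTop_zero.add tendsto_const_nhds
    rw [zero_add] at h1
    exact tendsto_const_nhds.add (tendsto_const_nhds.div h1 hg.ne')
  have hlog : Tendsto (fun c : ℝ => Real.log (1 + h / (c⁻¹ + g))) atTop
      (nhds (Real.log (1 + h / g))) := by
    have hne : (1 : ℝ) + h / g ≠ 0 := by positivity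
    exact ((Real.continuousAt_log hne).tendsto.comp key)
  refine hlog.congr' ?_
  filter_upwards [eventually_gt_atTop (0 : ℝ)] with c hc
  congr 1
  have h1 : (0:ℝ) < 1 + c * g := by positivity
  have h2 : (0:ℝ) < c⁻¹ + g := by positivity
  field_simp

private lemma integral_log_tendsto {Ω : Type*} [MeasurableSpace Ω] (μ : Measure Ω)
    [IsProbabilityMeasure μ] (H G : Ω → ℝ)
    (hHm : Measurable H) (hGm : Measurable G)
    (hH : ∀ ω, 0 ≤ H ω) (hG : ∀ ω, 0 ≤ G ω)
    (hGpos : ∀ᵐ ω ∂μ, 0 < G ω)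
    (hint : Integrable (fun ω => Real.log (1 + H ω / G ω)) μ) :
    Tendsto (fun c : ℝ => ∫ ω, Real.log (1 + c * H ω / (1 + c * G ω)) ∂μ) atTop
      (nhds (∫ ω, Real.log (1 + H ω / G ω) ∂μ)) := by
  refine tendsto_integral_filter_of_dominated_convergence
    (fun ω => Real.log (1 + H ω / G ω)) ?_ ?_ hint ?_
  · filter_upwards with c
    exact (Real.measurable_log.comp
      ((measurable_const.add ((hHm.const_mul c).div
        (measurable_const.add (hGm.const_mul c)))))).aestronglyMeasurable
  · filter_upwards [eventually_ge_atTop (0 : ℝ)] with c hc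
    filter_upwards [hGpos] with ω hω
    have h1 : (0:ℝ) < 1 + c * G ω := by positivity
    have harg : (0:ℝ) ≤ c * H ω / (1 + c * G ω) :=
      div_nonneg (mul_nonneg hc (hH ω)) h1.le
    have hle : c * H ω / (1 + c * G ω) ≤ H ω / G ω := by
      rw [div_le_div_iff₀ h1 hω]
      have : c * H ω * G ω ≤ H ω * (1 + c * G ω) := by nlinarith [hH ω]
      linarith
    have h0 : 0 ≤ Real.log (1 + c * H ω / (1 + c * G ω)) :=
      Real.log_nonneg (by linarith)
    rw [Real.norm_eq_abs, abs_of_nonneg h0]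
    exact Real.log_le_log (by linarith) (by linarith)
  · filter_upwards [hGpos] with ω hω
    exact log_frac_tendsto (H ω) (G ω) (hH ω) hω

open Filter MeasureTheory in
/-- High-SNR limit of the public-discussion achievable rate `R_PD(P)` of Proposition 1,
with power split `P₁ = P − √P`, `P₂ = √P/(T−1)` and `α = P₁/(P₁+1)`:
`R_PD(P) → −(1/T)·log (1−ρ²) + ((T−1)/T)·(∫ log (1+H₁/G₁) dμ + ∫ log (1+H₂/G₂) dμ)`. -/
theorem tendsto_RPD_atTop
    {Ω : Type*} [MeasurableSpace Ω] (μ : Measure Ω) [IsProbabilityMeasure μ]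
    (H₁ G₁ H₂ G₂ : Ω → ℝ)
    (hH₁m : Measurable H₁) (hG₁m : Measurable G₁)
    (hH₂m : Measurable H₂) (hG₂m : Measurable G₂)
    (hH₁ : ∀ ω, 0 ≤ H₁ ω) (hG₁ : ∀ ω, 0 ≤ G₁ ω)
    (hH₂ : ∀ ω, 0 ≤ H₂ ω) (hG₂ : ∀ ω, 0 ≤ G₂ ω)
    (hG₁pos : ∀ᵐ ω ∂μ, 0 < G₁ ω) (hG₂pos : ∀ᵐ ω ∂μ, 0 < G₂ ω)
    (hint₁ : Integrable (fun ω => Real.log (1 + H₁ ω / G₁ ω)) μ)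
    (hint₂ : Integrable (fun ω => Real.log (1 + H₂ ω / G₂ ω)) μ)
    (T : ℕ) (hT : 2 ≤ T) (ρ : ℝ) (hρ : ρ ^ 2 < 1) :
    Tendsto (fun P : ℝ =>
        (1 / (T : ℝ)) *
            (-Real.log (1 - ((P - Real.sqrt P) / ((P - Real.sqrt P) + 1)) ^ 2 * ρ ^ 2)) +
          (((T : ℝ) - 1) / (T : ℝ)) *
            ((∫ ω, Real.log (1 + (Real.sqrt P / ((T : ℝ) - 1)) * H₁ ω /
                  (1 + (Real.sqrt P / ((T : ℝ) - 1)) * G₁ ω)) ∂μ) -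
              Real.log (1 + (Real.sqrt P / ((T : ℝ) - 1)) / (1 + (P - Real.sqrt P))) +
              (∫ ω, Real.log (1 + (Real.sqrt P / ((T : ℝ) - 1)) * H₂ ω /
                  (1 + (Real.sqrt P / ((T : ℝ) - 1)) * G₂ ω)) ∂μ) -
              Real.log (1 + (Real.sqrt P / ((T : ℝ) - 1)) / (1 + (P - Real.sqrt P)))))
      atTop
      (nhds (-(1 / (T : ℝ)) * Real.log (1 - ρ ^ 2) +
        (((T : ℝ) - 1) / (T : ℝ)) *
          ((∫ ω, Real.log (1 + H₁ ω / G₁ ω) ∂μ) +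
            (∫ ω, Real.log (1 + H₂ ω / G₂ ω) ∂μ)))) := by
  have hT1 : (1:ℝ) ≤ (T : ℝ) - 1 := by
    have : (2:ℝ) ≤ (T:ℝ) := by exact_mod_cast hT
    linarith
  have hT1pos : (0:ℝ) < (T : ℝ) - 1 := by linarith
  -- c(P) = √P/(T-1) → ∞
  have hc : Tendsto (fun P : ℝ => Real.sqrt P / ((T : ℝ) - 1)) atTop atTop :=
    Tendsto.atTop_div_const hT1pos sqrt_tendsto_atTop
  -- first term
  have hα : Tendsto (fun P : ℝ => (P - Real.sqrt P) / ((P - Real.sqrt P) + 1)) atTop (nhds 1) :=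
    frac_tendsto_one.comp sub_sqrt_tendsto_atTop
  have harg : Tendsto (fun P : ℝ =>
      1 - ((P - Real.sqrt P) / ((P - Real.sqrt P) + 1)) ^ 2 * ρ ^ 2) atTop
      (nhds (1 - ρ ^ 2)) := by
    have := (tendsto_const_nhds : Tendsto (fun _ : ℝ => (1:ℝ)) atTop (nhds 1)).sub
      (((hα.pow 2)).mul_const (ρ ^ 2))
    simpa using this
  have h1 : Tendsto (fun P : ℝ =>
      (1 / (T : ℝ)) *
        (-Real.log (1 - ((P - Real.sqrt P) / ((P - Real.sqrt P) + 1)) ^ 2 * ρ ^ 2))) atTop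
      (nhds ((1 / (T : ℝ)) * (-Real.log (1 - ρ ^ 2)))) := by
    have hne : (1:ℝ) - ρ ^ 2 ≠ 0 := by nlinarith
    exact (((Real.continuousAt_log hne).tendsto.comp harg).neg).const_mul _
  -- L(P) → 0
  have hL : Tendsto (fun P : ℝ =>
      Real.log (1 + (Real.sqrt P / ((T : ℝ) - 1)) / (1 + (P - Real.sqrt P)))) atTop
      (nhds 0) := by
    have hr : Tendsto (fun P : ℝ =>
        (Real.sqrt P / ((T : ℝ) - 1)) / (1 + (P - Real.sqrt P))) atTop (nhds 0) := by
      apply squeeze_zero'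
      · filter_upwards [eventually_ge_atTop (4 : ℝ)] with P hP
        have h4 : (0:ℝ) ≤ P := by linarith
        have hs2 : Real.sqrt P ≤ P / 2 := by
          have h := (Real.le_sqrt (by norm_num) h4).mpr (by linarith : (2:ℝ)^2 ≤ P)
          nlinarith [Real.sqrt_nonneg P, Real.sq_sqrt h4]
        have hden : (0:ℝ) < 1 + (P - Real.sqrt P) := by linarith
        positivity
      · filter_upwards [eventually_ge_atTop (4 : ℝ)] with P hP
        have h4 : (0:ℝ) ≤ P := by linarith
        have hsp : (2:ℝ) ≤ Real.sqrt P :=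
          (Real.le_sqrt (by norm_num) h4).mpr (by linarith : (2:ℝ)^2 ≤ P)
        have hs2 : Real.sqrt P ≤ P / 2 := by
          nlinarith [Real.sq_sqrt h4]
        have hden : P / 2 ≤ 1 + (P - Real.sqrt P) := by linarith
        have hstep : (Real.sqrt P / ((T : ℝ) - 1)) / (1 + (P - Real.sqrt P))
            ≤ Real.sqrt P / (P / 2) :=
          div_le_div₀ (Real.sqrt_nonneg P)
            (by
              rw [div_le_iff₀ hT1pos]
              nlinarith [Real.sqrt_nonneg P])
            (by linarith) hden
        have heq : Real.sqrt P / (P / 2) = 2 / Real.sqrt P := by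
          have hps : Real.sqrt P * Real.sqrt P = P := Real.mul_self_sqrt h4
          have hspos : (0:ℝ) < Real.sqrt P := by linarith
          field_simp
          nlinarith
        calc (Real.sqrt P / ((T : ℝ) - 1)) / (1 + (P - Real.sqrt P))
            ≤ Real.sqrt P / (P / 2) := hstep
          _ = 2 / Real.sqrt P := heq
      · exact tendsto_const_nhds.div_atTop sqrt_tendsto_atTop
    have := (Real.continuousAt_log (by norm_num : (1:ℝ) + 0 ≠ 0)).tendsto.comp
      (tendsto_const_nhds.add hr)
    simpa [Function.comp_def] using this
  -- integrals
  have hI₁ : Tendsto (fun P : ℝ =>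
      ∫ ω, Real.log (1 + (Real.sqrt P / ((T : ℝ) - 1)) * H₁ ω /
        (1 + (Real.sqrt P / ((T : ℝ) - 1)) * G₁ ω)) ∂μ) atTop
      (nhds (∫ ω, Real.log (1 + H₁ ω / G₁ ω) ∂μ)) :=
    (integral_log_tendsto μ H₁ G₁ hH₁m hG₁m hH₁ hG₁ hG₁pos hint₁).comp hc
  have hI₂ : Tendsto (fun P : ℝ =>
      ∫ ω, Real.log (1 + (Real.sqrt P / ((T : ℝ) - 1)) * H₂ ω /
        (1 + (Real.sqrt P / ((T : ℝ) - 1)) * G₂ ω)) ∂μ) atTop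
      (nhds (∫ ω, Real.log (1 + H₂ ω / G₂ ω) ∂μ)) :=
    (integral_log_tendsto μ H₂ G₂ hH₂m hG₂m hH₂ hG₂ hG₂pos hint₂).comp hc
  have h2 := ((((hI₁.sub hL).add hI₂).sub hL).const_mul (((T : ℝ) - 1) / (T : ℝ)))
  have := h1.add h2
  convert this using 2 <;> ring
end

section
/- Let (Ω, F, μ) be a probability space and let X, Y : Ω → ℝ be independent random variables, each with law the exponential distribution of rate 1 on ℝ. Then the function ω ↦ log(1 + X(ω)/Y(ω)) is integrable and ∫ log(1 + X(ω)/Y(ω)) dμ(ω) = 1. -/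
open MeasureTheory ProbabilityTheory Real Set
open scoped ENNReal

section Aux

lemma expMeasure_one_eq : expMeasure 1 = volume.withDensity (exponentialPDF 1) := rfl

lemma exponentialPDF_measurable (r : ℝ) : Measurable (exponentialPDF r) :=
  (measurable_exponentialPDFReal r).ennreal_ofReal

lemma expMeasure_Iic (a : ℝ) :
    expMeasure 1 (Iic a) = ENNReal.ofReal (if 0 ≤ a then 1 - exp (-a) else 0) := by
  rw [expMeasure_one_eq, withDensity_apply _ measurableSet_Iic,
    lintegral_exponentialPDF_eq_antiDeriv one_pos a]
  simp

lemma expMeasure_Iio_zero : expMeasure 1 (Iio 0) = 0 := by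
  rw [expMeasure_one_eq, withDensity_apply _ measurableSet_Iio]
  exact lintegral_exponentialPDF_of_nonpos le_rfl

lemma expMeasure_Iic_zero : expMeasure 1 (Iic 0) = 0 := by
  rw [expMeasure_Iic]; simp

lemma expMeasure_Ioi {a : ℝ} (ha : 0 ≤ a) :
    expMeasure 1 (Ioi a) = ENNReal.ofReal (exp (-a)) := by
  have : IsProbabilityMeasure (expMeasure 1) := isProbabilityMeasure_expMeasure one_pos
  have h1 : Ioi a = (Iic a)ᶜ := by ext x; simp
  rw [h1, measure_compl measurableSet_Iic (measure_ne_top _ _), measure_univ,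
    expMeasure_Iic, if_pos ha]
  have he : exp (-a) ≤ 1 := exp_le_one_iff.2 (by linarith)
  have : (1 : ℝ≥0∞) = ENNReal.ofReal 1 := by simp
  rw [this, ← ENNReal.ofReal_sub _ (by linarith [exp_pos (-a)])]
  ring_nf

lemma expMeasure_ae_nonneg : ∀ᵐ x ∂(expMeasure 1), 0 ≤ x := by
  rw [MeasureTheory.ae_iff]
  convert expMeasure_Iio_zero using 2
  ext x; simp

lemma prod_exp_slope {c : ℝ} (hc : 0 ≤ c) :
    (expMeasure 1).prod (expMeasure 1) {p : ℝ × ℝ | c * p.1 < p.2}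
      = ENNReal.ofReal (1 / (1 + c)) := by
  have : IsProbabilityMeasure (expMeasure 1) := isProbabilityMeasure_expMeasure one_pos
  have hs : MeasurableSet {p : ℝ × ℝ | c * p.1 < p.2} :=
    measurableSet_lt (measurable_fst.const_mul c) measurable_snd
  rw [Measure.prod_apply hs]
  have h1 : ∫⁻ x, expMeasure 1 (Prod.mk x ⁻¹' {p : ℝ × ℝ | c * p.1 < p.2}) ∂(expMeasure 1)
      = ∫⁻ x, ENNReal.ofReal (exp (-(c * x))) ∂(expMeasure 1) := by
    refine lintegral_congr_ae ?_
    filter_upwards [expMeasure_ae_nonneg] with x hx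
    have : Prod.mk x ⁻¹' {p : ℝ × ℝ | c * p.1 < p.2} = Ioi (c * x) := by
      ext y; simp [Ioi]
    rw [this, expMeasure_Ioi (mul_nonneg hc hx)]
  have hg : Measurable fun x : ℝ => ENNReal.ofReal (rexp (-(c * x))) := by
    fun_prop
  rw [h1, expMeasure_one_eq,
    lintegral_withDensity_eq_lintegral_mul _ (exponentialPDF_measurable 1) hg]
  have hpt : ∀ x : ℝ, exponentialPDF 1 x * ENNReal.ofReal (exp (-(c * x)))
      = ENNReal.ofReal (1 / (1 + c)) * exponentialPDF (1 + c) x := by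
    intro x
    rcases le_or_gt 0 x with hx | hx
    · rw [exponentialPDF_of_nonneg hx, exponentialPDF_of_nonneg hx,
        ← ENNReal.ofReal_mul (by positivity), ← ENNReal.ofReal_mul (by positivity)]
      congr 1
      have h1c : (1 : ℝ) + c ≠ 0 := by positivity
      rw [one_mul, ← Real.exp_add]
      field_simp
      ring
    · rw [exponentialPDF_of_neg hx, exponentialPDF_of_neg hx, zero_mul, mul_zero]
  simp only [Pi.mul_apply, hpt]
  rw [lintegral_const_mul _ (exponentialPDF_measurable (1 + c)),
    lintegral_exponentialPDF_eq_one (by positivity), mul_one]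

end Aux

open MeasureTheory ProbabilityTheory in
/-- For independent rate-1 exponential random variables `X, Y`,
`log (1 + X/Y)` is integrable and `∫ log (1 + X/Y) dμ = 1`. -/
theorem integral_log_ratio_exponential
    {Ω : Type*} {F : MeasurableSpace Ω} (μ : Measure Ω) [IsProbabilityMeasure μ]
    (X Y : Ω → ℝ) (hXm : Measurable X) (hYm : Measurable Y)
    (hindep : IndepFun X Y μ)
    (hXlaw : μ.map X = expMeasure 1) (hYlaw : μ.map Y = expMeasure 1) :
    Integrable (fun ω => Real.log (1 + X ω / Y ω)) μ ∧
      ∫ ω, Real.log (1 + X ω / Y ω) ∂μ = 1 := by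
  set f : Ω → ℝ := fun ω => Real.log (1 + X ω / Y ω) with hf
  have hfm : Measurable f := (measurable_const.add (hXm.div hYm)).log
  -- a.e. nonnegativity of X, positivity of Y
  have hX0 : ∀ᵐ ω ∂μ, 0 ≤ X ω := by
    rw [MeasureTheory.ae_iff]
    have : {ω | ¬ 0 ≤ X ω} = X ⁻¹' (Iio 0) := by ext ω; simp
    rw [this, ← Measure.map_apply hXm measurableSet_Iio, hXlaw]
    exact expMeasure_Iio_zero
  have hY0 : ∀ᵐ ω ∂μ, 0 < Y ω := by
    rw [MeasureTheory.ae_iff]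
    have : {ω | ¬ 0 < Y ω} = Y ⁻¹' (Iic 0) := by ext ω; simp
    rw [this, ← Measure.map_apply hYm measurableSet_Iic, hYlaw]
    exact expMeasure_Iic_zero
  have hfnn : 0 ≤ᵐ[μ] f := by
    filter_upwards [hX0, hY0] with ω hX hY
    exact Real.log_nonneg (by have := div_nonneg hX hY.le; linarith)
  -- joint law
  have hmap : μ.map (fun ω => (Y ω, X ω)) = (expMeasure 1).prod (expMeasure 1) := by
    rw [(indepFun_iff_map_prod_eq_prod_map_map hYm.aemeasurable hXm.aemeasurable).1
      hindep.symm, hXlaw, hYlaw]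
  -- tail probability
  have htail : ∀ t : ℝ, 0 < t → μ {ω | t < f ω} = ENNReal.ofReal (exp (-t)) := by
    intro t ht
    set c : ℝ := Real.exp t - 1 with hcdef
    have hc : 0 ≤ c := by
      have := Real.one_le_exp ht.le
      simp [hcdef]; linarith
    have hset : {ω | t < f ω} =ᵐ[μ] {ω | c * Y ω < X ω} := by
      rw [Filter.eventuallyEq_set]
      filter_upwards [hX0, hY0] with ω hX hY
      have hpos : 0 < 1 + X ω / Y ω := by
        have := div_nonneg hX hY.le; linarith
      simp only [Set.mem_setOf_eq, hf]
      rw [Real.lt_log_iff_exp_lt hpos]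
      constructor
      · intro h
        have : c < X ω / Y ω := by simp [hcdef]; linarith
        calc c * Y ω < (X ω / Y ω) * Y ω := by
              exact mul_lt_mul_of_pos_right this hY
          _ = X ω := by field_simp
      · intro h
        have : c < X ω / Y ω := (lt_div_iff₀ hY).2 h
        simp only [hcdef] at this; linarith
    rw [measure_congr hset]
    have hs : MeasurableSet {p : ℝ × ℝ | c * p.1 < p.2} :=
      measurableSet_lt (measurable_fst.const_mul c) measurable_snd
    have : {ω | c * Y ω < X ω} = (fun ω => (Y ω, X ω)) ⁻¹' {p : ℝ × ℝ | c * p.1 < p.2} := rfl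
    rw [this, ← Measure.map_apply (hYm.prodMk hXm) hs, hmap, prod_exp_slope hc]
    congr 1
    have h1c : 1 + c = Real.exp t := by simp [hcdef]
    rw [h1c, Real.exp_neg]
    simp [one_div]
  -- layer cake
  have hlint : ∫⁻ ω, ENNReal.ofReal (f ω) ∂μ = 1 := by
    rw [lintegral_eq_lintegral_meas_lt μ hfnn hfm.aemeasurable]
    have h1 : ∫⁻ t in Ioi (0:ℝ), μ {a | t < f a}
        = ∫⁻ t in Ioi (0:ℝ), ENNReal.ofReal (Real.exp (-t)) := by
      refine setLIntegral_congr_fun measurableSet_Ioi ?_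
      intro t ht
      exact htail t ht
    rw [h1, ← ofReal_integral_eq_lintegral_ofReal ?_ ?_]
    · rw [integral_exp_neg_Ioi_zero, ENNReal.ofReal_one]
    · have := exp_neg_integrableOn_Ioi 0 (one_pos)
      simpa [IntegrableOn] using this
    · exact Filter.Eventually.of_forall fun x => (Real.exp_pos _).le
  have hint : Integrable f μ := by
    refine ⟨hfm.aestronglyMeasurable, ?_⟩
    rw [hasFiniteIntegral_iff_ofReal hfnn, hlint]
    exact ENNReal.one_lt_top
  refine ⟨hint, ?_⟩
  rw [integral_eq_lintegral_of_nonneg_ae hfnn hfm.aestronglyMeasurable, hlint]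
  simp
end

section
/- Let (Ω, μ) be a probability space and let H, G : Ω → ℝ be nonnegative measurable functions with G > 0 almost everywhere, such that ω ↦ log(1 + H(ω)/G(ω)) is integrable. Let P₂, Q₂, σ² : ℝ → ℝ be functions with P₂(P) > 0, Q₂(P) ≥ 0 and σ²(P) ≥ 0 for all P, such that P₂(P) tends to infinity, Q₂(P) tends to 0, and σ²(P)·P₂(P) tends to 0 as P tends to infinity. Then the function P ↦ ∫ log(1 + P₂(P)·H/((1 + Q₂(P))·(1 + P₂(P)·G))) dμ − log(1 + σ²(P)·P₂(P)/(1 + Q₂(P))) tends to ∫ log(1 + H/G) dμ as P tends to infinity. -/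
open Filter MeasureTheory in
/-- Limit (133): the no-discussion rate term
`∫ log (1 + P₂H/((1+Q₂)(1+P₂G))) dμ − log (1 + σ²P₂/(1+Q₂))` tends to
`∫ log (1 + H/G) dμ` as `P → ∞`, when `P₂ → ∞`, `Q₂ → 0` and `σ²·P₂ → 0`. -/
theorem tendsto_R_AB_noDiscussion_atTop
    {Ω : Type*} [MeasurableSpace Ω] (μ : Measure Ω) [IsProbabilityMeasure μ]
    (H G : Ω → ℝ) (hHm : Measurable H) (hGm : Measurable G)
    (hH : ∀ ω, 0 ≤ H ω) (hG : ∀ᵐ ω ∂μ, 0 < G ω)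
    (hint : Integrable (fun ω => Real.log (1 + H ω / G ω)) μ)
    (P₂ Q₂ σsq : ℝ → ℝ)
    (hP₂ : ∀ P, 0 < P₂ P) (hQ₂ : ∀ P, 0 ≤ Q₂ P) (hσsq : ∀ P, 0 ≤ σsq P)
    (hP₂lim : Tendsto P₂ atTop atTop)
    (hQ₂lim : Tendsto Q₂ atTop (nhds 0))
    (hσP₂lim : Tendsto (fun P => σsq P * P₂ P) atTop (nhds 0)) :
    Tendsto (fun P : ℝ =>
        (∫ ω, Real.log (1 + P₂ P * H ω / ((1 + Q₂ P) * (1 + P₂ P * G ω))) ∂μ) -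
          Real.log (1 + σsq P * P₂ P / (1 + Q₂ P)))
      atTop (nhds (∫ ω, Real.log (1 + H ω / G ω) ∂μ)) := by
  have hQ1 : Tendsto (fun P => 1 + Q₂ P) atTop (nhds 1) := by
    simpa using tendsto_const_nhds.add hQ₂lim
  -- second term → 0
  have h2 : Tendsto (fun P => Real.log (1 + σsq P * P₂ P / (1 + Q₂ P))) atTop (nhds 0) := by
    have hdiv : Tendsto (fun P => σsq P * P₂ P / (1 + Q₂ P)) atTop (nhds 0) := by
      simpa [Pi.div_def] using hσP₂lim.div hQ1 one_ne_zero
    have h1 : Tendsto (fun P => 1 + σsq P * P₂ P / (1 + Q₂ P)) atTop (nhds 1) := by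
      simpa using tendsto_const_nhds.add hdiv
    have := (Real.continuousAt_log one_ne_zero).tendsto.comp h1
    simpa [Function.comp_def] using this
  -- first term → ∫ log (1 + H/G)
  have h1 : Tendsto (fun P => ∫ ω, Real.log (1 + P₂ P * H ω / ((1 + Q₂ P) * (1 + P₂ P * G ω))) ∂μ)
      atTop (nhds (∫ ω, Real.log (1 + H ω / G ω) ∂μ)) := by
    apply tendsto_integral_filter_of_dominated_convergence
      (fun ω => Real.log (1 + H ω / G ω))
    · refine Eventually.of_forall fun P => ?_
      exact (Real.measurable_log.comp <| (measurable_const.add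
        (((measurable_const.mul hHm).div
          (measurable_const.mul (measurable_const.add (measurable_const.mul hGm))))))).aestronglyMeasurable
    · refine Eventually.of_forall fun P => ?_
      filter_upwards [hG] with ω hGω
      have hP := hP₂ P
      have hQ := hQ₂ P
      have hHω := hH ω
      have hden : 0 < (1 + Q₂ P) * (1 + P₂ P * G ω) := by positivity
      have hx0 : 0 ≤ P₂ P * H ω / ((1 + Q₂ P) * (1 + P₂ P * G ω)) := by positivity
      have hx1 : P₂ P * H ω / ((1 + Q₂ P) * (1 + P₂ P * G ω)) ≤ H ω / G ω := by
        rw [div_le_div_iff₀ hden hGω]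
        nlinarith [mul_nonneg hHω hQ, mul_nonneg (mul_nonneg hHω hQ) (mul_pos hP hGω).le,
          mul_nonneg hHω (mul_pos hP hGω).le]
      rw [Real.norm_eq_abs, abs_of_nonneg (Real.log_nonneg (by linarith))]
      exact Real.log_le_log (by linarith) (by linarith)
    · exact hint
    · filter_upwards [hG] with ω hGω
      have heq : ∀ P, 1 + P₂ P * H ω / ((1 + Q₂ P) * (1 + P₂ P * G ω))
          = 1 + H ω / ((1 + Q₂ P) * ((P₂ P)⁻¹ + G ω)) := by
        intro P
        have hP := hP₂ P
        have hQ := hQ₂ P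
        have h1 : (0 : ℝ) < (1 + Q₂ P) * (1 + P₂ P * G ω) := by positivity
        have h3 : (0 : ℝ) < (1 + Q₂ P) * ((P₂ P)⁻¹ + G ω) := by positivity
        congr 1
        rw [div_eq_div_iff h1.ne' h3.ne']
        field_simp
      have hinv : Tendsto (fun P => (P₂ P)⁻¹ + G ω) atTop (nhds (G ω)) := by
        simpa using (hP₂lim.inv_tendsto_atTop).add (tendsto_const_nhds : Tendsto _ atTop (nhds (G ω)))
      have hdenlim : Tendsto (fun P => (1 + Q₂ P) * ((P₂ P)⁻¹ + G ω)) atTop (nhds (G ω)) := by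
        simpa using hQ1.mul hinv
      have hxlim : Tendsto (fun P => 1 + H ω / ((1 + Q₂ P) * ((P₂ P)⁻¹ + G ω))) atTop
          (nhds (1 + H ω / G ω)) := by
        exact tendsto_const_nhds.add (tendsto_const_nhds.div hdenlim hGω.ne')
      have hpos : (0 : ℝ) < 1 + H ω / G ω := by
        have : 0 ≤ H ω / G ω := div_nonneg (hH ω) hGω.le
        linarith
      have := (Real.continuousAt_log hpos.ne').tendsto.comp hxlim
      simp only [heq]
      exact this
  simpa using h1.sub h2
end
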